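/- A compatible measure-preserving mapping T : Z_2 → Z_2 is ergodic (induces a single-cycle permutation modulo 2^n for all n) if and only if in the representation δ_i(T(x)) = χ_i + φ_i(χ_0,...,χ_{i-1}) (mod 2), each Boolean function φ_i has odd weight, i.e., takes the value 1 at an odd number of points of {0,1}^i. -/

import Mathlib

open scoped BigOperators

/-- The `j`-th binary digit of a 2-adic integer, as an element of `ZMod 2`. -/
noncomputable def bit2 (j : ℕ) (x : ℤ_[2]) : ZMod 2 := ((x.appr (j+1) / 2^j : ℕ) : ZMod 2)

/-- Compatibility = 1-Lipschitz w.r.t. the 2-adic metric. -/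
def Compatible (f : ℤ_[2] → ℤ_[2]) : Prop := ∀ x y : ℤ_[2], ‖f x - f y‖ ≤ ‖x - y‖

/-- Reduction of a 2-adic integer modulo `2^n`. -/
noncomputable def padMod (n : ℕ) (x : ℤ_[2]) : ZMod (2^n) := (x.appr n : ZMod (2^n))

/-- The map induced by `f : ℤ₂ → ℤ₂` on `ZMod (2^n)` (via canonical lifts). -/
noncomputable def inducedMap (n : ℕ) (f : ℤ_[2] → ℤ_[2]) : ZMod (2^n) → ZMod (2^n) :=
  fun a => padMod n (f ((a.val : ℕ) : ℤ_[2]))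

/-- A self-map of a set is a single cycle (transitive on points). -/
def IsSingleCycle {α : Type*} (g : α → α) : Prop := ∀ a b : α, ∃ k : ℕ, g^[k] a = b

/-- Measure preservation: `f` induces a bijection modulo `2^n` for every `n`. -/
def MeasurePreservingZ (f : ℤ_[2] → ℤ_[2]) : Prop := ∀ n : ℕ, Function.Bijective (inducedMap n f)

/-- Ergodicity: `f` induces a single-cycle permutation modulo `2^n` for every `n`. -/
def ErgodicZ (f : ℤ_[2] → ℤ_[2]) : Prop := ∀ n : ℕ, IsSingleCycle (inducedMap n f)

/-- Induced map modulo `2^n` of an `m`-variate map on `(ℤ₂)^m`. -/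
noncomputable def inducedMapM (m n : ℕ) (G : (Fin m → ℤ_[2]) → Fin m → ℤ_[2]) :
    (Fin m → ZMod (2^n)) → Fin m → ZMod (2^n) :=
  fun a j => padMod n (G (fun i => (((a i).val : ℕ) : ℤ_[2])) j)

/-- Coordinatewise compatibility of an `m`-variate map. -/
def CompatibleM (m : ℕ) (G : (Fin m → ℤ_[2]) → Fin m → ℤ_[2]) : Prop :=
  ∀ (n : ℕ) (x y : Fin m → ℤ_[2]), (∀ i, padMod n (x i) = padMod n (y i)) →
    ∀ j, padMod n (G x j) = padMod n (G y j)

/-- Ergodicity of an `m`-variate map: single cycle modulo `2^n` for all `n`. -/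
def ErgodicM (m : ℕ) (G : (Fin m → ℤ_[2]) → Fin m → ℤ_[2]) : Prop :=
  ∀ n : ℕ, IsSingleCycle (inducedMapM m n G)

/-- The 2-adic integer with prescribed binary digits. -/
noncomputable def ofBits (b : ℕ → ZMod 2) : ℤ_[2] := ∑' i : ℕ, ((b i).val : ℤ_[2]) * 2^i

/-- Bitwise XOR of 2-adic integers. -/
noncomputable def xor2 (x y : ℤ_[2]) : ℤ_[2] := ofBits (fun i => bit2 i x + bit2 i y)

/-- Bitwise AND of 2-adic integers. -/
noncomputable def and2 (x y : ℤ_[2]) : ℤ_[2] := ofBits (fun i => bit2 i x * bit2 i y)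

/-- Bitwise AND of a list, the empty AND being `-1` (the all-ones string). -/
noncomputable def andL (l : List ℤ_[2]) : ℤ_[2] := l.foldr and2 (-1)

namespace Erg
set_option linter.unusedSectionVars false
set_option linter.unusedTactic false
set_option linter.unreachableTactic false

/-- natural-number bit -/
noncomputable def bitN (n : ℕ) (x : ℤ_[2]) : ℕ := x.appr (n+1) / 2^n

lemma appr_zero (x : ℤ_[2]) : x.appr 0 = 0 := by
  have := x.appr_lt 0; simpa using this

lemma bitN_lt (n : ℕ) (x : ℤ_[2]) : bitN n x < 2 := by
  have h := x.appr_lt (n+1)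
  have : x.appr (n+1) < 2^n * 2 := by rw [← pow_succ]; exact_mod_cast h
  exact Nat.div_lt_of_lt_mul (by omega)

lemma appr_succ (x : ℤ_[2]) (n : ℕ) :
    x.appr (n+1) = x.appr n + 2^n * bitN n x := by
  obtain ⟨c, hc⟩ := x.dvd_appr_sub_appr n (n+1) (Nat.le_succ n)
  have hmono : x.appr n ≤ x.appr (n+1) := x.appr_mono (Nat.le_succ n)
  have heq : x.appr (n+1) = x.appr n + 2^n * c := by omega
  have hlt : x.appr n < 2^n := by exact_mod_cast x.appr_lt n
  have : bitN n x = c := by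
    unfold bitN
    rw [heq, Nat.add_mul_div_left _ _ (Nat.two_pow_pos n),
      Nat.div_eq_of_lt hlt, zero_add]
  rw [this, heq]

lemma bit2_eq (n : ℕ) (x : ℤ_[2]) : bit2 n x = ((bitN n x : ℕ) : ZMod 2) := rfl

lemma appr_eq_sum (x : ℤ_[2]) (n : ℕ) :
    x.appr n = ∑ j ∈ Finset.range n, 2^j * bitN j x := by
  induction n with
  | zero => simp [appr_zero]
  | succ n ih => rw [Finset.sum_range_succ, ← ih, appr_succ]

lemma padMod_eq_iff_appr (n : ℕ) (x y : ℤ_[2]) :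
    padMod n x = padMod n y ↔ x.appr n = y.appr n := by
  constructor
  · intro h
    have hx := x.appr_lt n; have hy := y.appr_lt n
    have := congrArg ZMod.val h
    unfold padMod at this
    rwa [ZMod.val_natCast_of_lt (by exact_mod_cast hx),
      ZMod.val_natCast_of_lt (by exact_mod_cast hy)] at this
  · intro h; unfold padMod; rw [h]

lemma appr_mod (x : ℤ_[2]) {m n : ℕ} (h : m ≤ n) : x.appr m = x.appr n % 2^m := by
  obtain ⟨c, hc⟩ := x.dvd_appr_sub_appr m n h
  have hmono := x.appr_mono h
  have hlt : x.appr m < 2^m := by exact_mod_cast x.appr_lt m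
  have : x.appr n = x.appr m + 2^m * c := by omega
  rw [this, Nat.add_mul_mod_self_left, Nat.mod_eq_of_lt hlt]

lemma bit2_eq_of_padMod (n : ℕ) {x y : ℤ_[2]} (h : padMod n x = padMod n y) :
    ∀ j < n, bit2 j x = bit2 j y := by
  intro j hj
  rw [padMod_eq_iff_appr] at h
  have hx := appr_mod x (show j+1 ≤ n from hj)
  have hy := appr_mod y (show j+1 ≤ n from hj)
  unfold bit2; rw [hx, hy, h]

lemma padMod_of_bits (n : ℕ) {x y : ℤ_[2]} (h : ∀ j < n, bit2 j x = bit2 j y) :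
    padMod n x = padMod n y := by
  rw [padMod_eq_iff_appr, appr_eq_sum, appr_eq_sum]
  refine Finset.sum_congr rfl fun j hj => ?_
  have hj' := Finset.mem_range.mp hj
  have hbx := bitN_lt j x; have hby := bitN_lt j y
  have := h j hj'
  rw [bit2_eq, bit2_eq] at this
  have : (bitN j x : ZMod 2).val = (bitN j y : ZMod 2).val := by rw [this]
  rw [ZMod.val_natCast_of_lt hbx, ZMod.val_natCast_of_lt hby] at this
  rw [this]

lemma padMod_succ_iff (n : ℕ) (x y : ℤ_[2]) :
    padMod (n+1) x = padMod (n+1) y ↔ padMod n x = padMod n y ∧ bit2 n x = bit2 n y := by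
  constructor
  · intro h
    refine ⟨padMod_of_bits n fun j hj => bit2_eq_of_padMod (n+1) h j (by omega),
      bit2_eq_of_padMod (n+1) h n (by omega)⟩
  · rintro ⟨h1, h2⟩
    rw [padMod_eq_iff_appr] at h1 ⊢
    rw [appr_succ, appr_succ, h1]
    have hbx := bitN_lt n x; have hby := bitN_lt n y
    rw [bit2_eq, bit2_eq] at h2
    have : (bitN n x : ZMod 2).val = (bitN n y : ZMod 2).val := by rw [h2]
    rw [ZMod.val_natCast_of_lt hbx, ZMod.val_natCast_of_lt hby] at this
    rw [this]

lemma padMod_succ_add (n : ℕ) {x y : ℤ_[2]} (h : padMod n x = padMod n y)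
    (hb : bit2 n y = bit2 n x + 1) :
    padMod (n+1) y = padMod (n+1) x + ((2^n : ℕ) : ZMod (2^(n+1))) := by
  rw [padMod_eq_iff_appr] at h
  have hbx := bitN_lt n x; have hby := bitN_lt n y
  have hx := appr_succ x n; have hy := appr_succ y n
  have h20 : ((2^(n+1) : ℕ) : ZMod (2^(n+1))) = 0 := by exact_mod_cast ZMod.natCast_self _
  have hcase : (bitN n x = 0 ∧ bitN n y = 1) ∨ (bitN n x = 1 ∧ bitN n y = 0) := by
    rw [bit2_eq, bit2_eq] at hb
    interval_cases hx' : bitN n x <;> interval_cases hy' : bitN n y <;> simp_all <;> omega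
  unfold padMod
  rcases hcase with ⟨h0, h1⟩ | ⟨h0, h1⟩
  · rw [hx, hy, h0, h1, h]; push_cast; ring
  · rw [hx, hy, h0, h1, h]; push_cast
    have h2n : ((2:ZMod (2^(n+1)))^n) + ((2:ZMod (2^(n+1)))^n) = 0 := by
      push_cast at h20
      rw [← two_mul, ← pow_succ']
      exact h20
    linear_combination -h2n

lemma padMod_natCast (n m : ℕ) : padMod n (m : ℤ_[2]) = (m : ZMod (2^n)) := by
  show PadicInt.toZModPow n (m:ℤ_[2]) = _ ; rw [map_natCast]

lemma padMod_val (n : ℕ) (a : ZMod (2^n)) : padMod n ((a.val : ℕ) : ℤ_[2]) = a := by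
  rw [padMod_natCast]; simp [ZMod.natCast_val, ZMod.cast_id]

lemma padMod_eq_iff_norm (n : ℕ) (x y : ℤ_[2]) :
    padMod n x = padMod n y ↔ ‖x - y‖ ≤ (2:ℝ)^(-(n:ℤ)) := by
  have h2 : ((2:ℕ):ℝ) = (2:ℝ) := by norm_num
  rw [← h2, PadicInt.norm_le_pow_iff_mem_span_pow]
  constructor
  · intro h
    have h0 : PadicInt.toZModPow n (x - y) = 0 := by
      rw [map_sub, sub_eq_zero]; exact h
    have := RingHom.mem_ker.mpr h0
    rwa [PadicInt.ker_toZModPow] at this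
  · intro h
    have h0 : PadicInt.toZModPow n (x - y) = 0 := by
      rw [← RingHom.mem_ker, PadicInt.ker_toZModPow]; exact h
    rw [map_sub, sub_eq_zero] at h0; exact h0

lemma compat_padMod {T : ℤ_[2] → ℤ_[2]} (hTc : Compatible T) (n : ℕ) {x y : ℤ_[2]}
    (h : padMod n x = padMod n y) : padMod n (T x) = padMod n (T y) := by
  rw [padMod_eq_iff_norm] at h ⊢
  exact le_trans (hTc x y) h

lemma inducedMap_padMod {T : ℤ_[2] → ℤ_[2]} (hTc : Compatible T) (n : ℕ) (x : ℤ_[2]) :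
    inducedMap n T (padMod n x) = padMod n (T x) := by
  unfold inducedMap
  exact compat_padMod hTc n (padMod_val n (padMod n x))

lemma inducedMap_iterate {T : ℤ_[2] → ℤ_[2]} (hTc : Compatible T) (n : ℕ) {k : ℕ} (x : ℤ_[2]) :
    (inducedMap n T)^[k] (padMod n x) = padMod n (T^[k] x) := by
  induction k with
  | zero => rfl
  | succ k ih =>
    rw [Function.iterate_succ_apply', ih, inducedMap_padMod hTc,
      Function.iterate_succ_apply']

section Cycle
variable {α : Type*} [Fintype α] {g : α → α}

lemma iterate_periodic {a : α} {p : ℕ} (hp : g^[p] a = a) (q : ℕ) :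
    g^[q * p] a = a := by
  induction q with
  | zero => simp
  | succ q ih => rw [Nat.succ_mul, Function.iterate_add_apply, hp, ih]

lemma iterate_mod_period {a : α} {p : ℕ} (hp : g^[p] a = a) (k : ℕ) :
    g^[k] a = g^[k % p] a := by
  conv_lhs => rw [show k = k % p + k / p * p from (Nat.mod_add_div' k p).symm]
  rw [Function.iterate_add_apply, iterate_periodic hp]

lemma period_ge (hsc : IsSingleCycle g) {a : α} {p : ℕ} (hppos : 0 < p)
    (hp : g^[p] a = a) : Fintype.card α ≤ p := by
  have hsurj : Function.Surjective (fun j : Fin p => g^[(j:ℕ)] a) := by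
    intro b
    obtain ⟨k, hk⟩ := hsc a b
    exact ⟨⟨k % p, Nat.mod_lt _ hppos⟩, by rw [← hk]; exact (iterate_mod_period hp k).symm⟩
  simpa using Fintype.card_le_of_surjective _ hsurj

lemma exists_period (hg : Function.Bijective g) (a : α) :
    ∃ p, 0 < p ∧ p ≤ Fintype.card α ∧ g^[p] a = a := by
  have hni : ¬ Function.Injective (fun j : Fin (Fintype.card α + 1) => g^[(j:ℕ)] a) := by
    intro hinj
    have := Fintype.card_le_of_injective _ hinj
    simp at this
  rw [Function.not_injective_iff] at hni
  obtain ⟨i, j, hij, hne⟩ := hni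
  wlog hlt : (i:ℕ) < (j:ℕ) generalizing i j
  · exact this j i hij.symm hne.symm (by omega)
  refine ⟨(j:ℕ) - (i:ℕ), by omega, by have := j.2; omega, ?_⟩
  have : g^[(i:ℕ)] (g^[(j:ℕ)-(i:ℕ)] a) = g^[(i:ℕ)] a := by
    rw [← Function.iterate_add_apply]
    rw [show (i:ℕ) + ((j:ℕ) - (i:ℕ)) = (j:ℕ) by omega]
    exact hij.symm
  exact Function.Injective.iterate hg.1 (i:ℕ) this

lemma iterate_card (hg : Function.Bijective g) (hsc : IsSingleCycle g) (a : α) :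
    g^[Fintype.card α] a = a := by
  obtain ⟨p, hp0, hple, hp⟩ := exists_period hg a
  have hge := period_ge hsc hp0 hp
  have : p = Fintype.card α := le_antisymm hple hge
  rwa [← this]

lemma no_fixed_iterate (hg : Function.Bijective g) (hsc : IsSingleCycle g) (a : α)
    {k : ℕ} (h0 : 0 < k) (hk : k < Fintype.card α) : g^[k] a ≠ a := fun h =>
  absurd (period_ge hsc h0 h) (by omega)
end Cycle

noncomputable def bitsMap (n : ℕ) : ZMod (2^n) → (Fin n → ZMod 2) :=
  fun a j => bit2 (j:ℕ) ((a.val : ℕ) : ℤ_[2])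

lemma bitsMap_padMod (n : ℕ) (x : ℤ_[2]) :
    bitsMap n (padMod n x) = fun j : Fin n => bit2 (j:ℕ) x := by
  funext j
  exact bit2_eq_of_padMod n (padMod_val n (padMod n x)) j j.2

lemma bitsMap_bijective (n : ℕ) : Function.Bijective (bitsMap n) := by
  rw [Fintype.bijective_iff_injective_and_card]
  constructor
  · intro a b hab
    have h := padMod_of_bits n (x := ((a.val : ℕ) : ℤ_[2])) (y := ((b.val : ℕ) : ℤ_[2]))
      (fun j hj => congrFun hab ⟨j, hj⟩)
    rwa [padMod_val, padMod_val] at h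
  · simp [ZMod.card]

lemma keyE {T : ℤ_[2] → ℤ_[2]} (hTc : Compatible T) (hTm : MeasurePreservingZ T)
    (n : ℕ) {x y : ℤ_[2]} (h : padMod n x = padMod n y) :
    bit2 n (T x) + bit2 n x = bit2 n (T y) + bit2 n y := by
  have hT : padMod n (T x) = padMod n (T y) := compat_padMod hTc n h
  by_cases hb : bit2 n x = bit2 n y
  · have h1 : padMod (n+1) x = padMod (n+1) y := (padMod_succ_iff n x y).mpr ⟨h, hb⟩
    have h2 := compat_padMod hTc (n+1) h1
    have h3 := bit2_eq_of_padMod (n+1) h2 n (by omega)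
    rw [hb, h3]
  · have h1 : padMod (n+1) x ≠ padMod (n+1) y := fun hc => hb ((padMod_succ_iff n x y).mp hc).2
    have h2 : padMod (n+1) (T x) ≠ padMod (n+1) (T y) := by
      intro hc
      apply h1
      apply (hTm (n+1)).1
      rw [inducedMap_padMod hTc, inducedMap_padMod hTc]
      exact hc
    have h3 : bit2 n (T x) ≠ bit2 n (T y) :=
      fun hc => h2 ((padMod_succ_iff n _ _).mpr ⟨hT, hc⟩)
    have : ∀ a b c d : ZMod 2, a ≠ b → c ≠ d → a + c = b + d := by decide
    exact this _ _ _ _ h3 hb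

lemma natCast_zmod2_eq_one_iff (c : ℕ) : ((c : ZMod 2) = 1) ↔ Odd c := by
  rw [Nat.odd_iff, ← ZMod.natCast_mod c 2]
  rcases Nat.mod_two_eq_zero_or_one c with hc | hc <;> rw [hc] <;> simp

lemma sum_eq_one_iff_odd {n : ℕ} (φ : (Fin n → ZMod 2) → ZMod 2) :
    (∑ v, φ v = 1) ↔ Odd (Finset.univ.filter (fun v : Fin n → ZMod 2 => φ v = 1)).card := by
  have hsum : ∑ v, φ v
      = ((Finset.univ.filter (fun v : Fin n → ZMod 2 => φ v = 1)).card : ZMod 2) := by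
    rw [← Finset.sum_filter_add_sum_filter_not Finset.univ (fun v => φ v = 1) φ]
    have h2 : ∑ v ∈ Finset.univ.filter (fun v => ¬ φ v = 1), φ v = 0 :=
      Finset.sum_eq_zero fun v hv => by
        have hv1 := (Finset.mem_filter.mp hv).2
        have : ∀ a : ZMod 2, a ≠ 1 → a = 0 := by decide
        exact this _ hv1
    have h1 : ∑ v ∈ Finset.univ.filter (fun v => φ v = 1), φ v
        = ((Finset.univ.filter (fun v : Fin n → ZMod 2 => φ v = 1)).card : ZMod 2) := by
      rw [Finset.sum_congr rfl (fun v hv => (Finset.mem_filter.mp hv).2)]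
      simp
    rw [h1, h2, add_zero]
  rw [hsum, natCast_zmod2_eq_one_iff]

lemma bit_iter_sum {T : ℤ_[2] → ℤ_[2]} {n : ℕ} {φ : (Fin n → ZMod 2) → ZMod 2}
    (hφ : ∀ x : ℤ_[2], bit2 n (T x) = bit2 n x + φ (fun s : Fin n => bit2 (s:ℕ) x))
    (K : ℕ) (x : ℤ_[2]) :
    bit2 n (T^[K] x) = bit2 n x
      + ∑ k ∈ Finset.range K, φ (fun s : Fin n => bit2 (s:ℕ) (T^[k] x)) := by
  induction K with
  | zero => simp
  | succ K ih =>
    rw [Function.iterate_succ_apply', hφ, ih, Finset.sum_range_succ]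
    ring

lemma sum_orbit {T : ℤ_[2] → ℤ_[2]} (hTc : Compatible T) {n : ℕ}
    (hbij : Function.Bijective (inducedMap n T)) (hsc : IsSingleCycle (inducedMap n T))
    (x : ℤ_[2]) (φ : (Fin n → ZMod 2) → ZMod 2) :
    ∑ k ∈ Finset.range (2^n), φ (fun s : Fin n => bit2 (s:ℕ) (T^[k] x)) = ∑ v, φ v := by
  have hN : (0:ℕ) < 2^n := Nat.two_pow_pos _
  have hcard : Fintype.card (ZMod (2^n)) = 2^n := ZMod.card _
  have hper : ∀ a : ZMod (2^n), (inducedMap n T)^[2^n] a = a := by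
    intro a
    have := iterate_card hbij hsc a
    rwa [hcard] at this
  have hFbij : Function.Bijective
      (fun j : Fin (2^n) => bitsMap n ((inducedMap n T)^[(j:ℕ)] (padMod n x))) := by
    rw [Fintype.bijective_iff_surjective_and_card]
    refine ⟨?_, by simp [ZMod.card]⟩
    intro v
    obtain ⟨a, rfl⟩ := (bitsMap_bijective n).2 v
    obtain ⟨k, hk⟩ := hsc (padMod n x) a
    refine ⟨⟨k % 2^n, Nat.mod_lt _ hN⟩, ?_⟩
    show bitsMap n ((inducedMap n T)^[k % 2^n] (padMod n x)) = _
    rw [← iterate_mod_period (hper _) k, hk]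
  calc ∑ k ∈ Finset.range (2^n), φ (fun s : Fin n => bit2 (s:ℕ) (T^[k] x))
      = ∑ j : Fin (2^n), φ (fun s : Fin n => bit2 (s:ℕ) (T^[(j:ℕ)] x)) :=
        (Fin.sum_univ_eq_sum_range (fun k => φ (fun s : Fin n => bit2 (s:ℕ) (T^[k] x))) (2^n)).symm
    _ = ∑ j : Fin (2^n), φ (bitsMap n ((inducedMap n T)^[(j:ℕ)] (padMod n x))) := by
        refine Finset.sum_congr rfl fun j _ => ?_
        congr 1
        rw [inducedMap_iterate hTc, bitsMap_padMod]
    _ = ∑ v, φ v := hFbij.sum_comp φ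

end Erg

/-- a compatible measure-preserving `T : ℤ₂ → ℤ₂` is ergodic iff in
the representation `δ_i(T x) = χ_i + φ_i(χ_0,…,χ_{i-1})` each `φ_i` has odd
weight (takes value 1 at an odd number of points of `{0,1}^i`). -/
theorem ergodic_iff_odd_weight (T : ℤ_[2] → ℤ_[2])
    (hTc : Compatible T) (hTm : MeasurePreservingZ T) :
    ErgodicZ T ↔
      ∀ (i : ℕ) (φ : (Fin i → ZMod 2) → ZMod 2),
        (∀ x : ℤ_[2], bit2 i (T x) = bit2 i x + φ (fun s => bit2 (s : ℕ) x)) →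
        Odd (Finset.univ.filter (fun v : Fin i → ZMod 2 => φ v = 1)).card := by
  constructor
  · intro hE i φ hφ
    have hsum := Erg.bit_iter_sum hφ (2^i) 0
    rw [Erg.sum_orbit hTc (hTm i) (hE i) 0 φ] at hsum
    have hne : padMod (i+1) (T^[2^i] 0) ≠ padMod (i+1) 0 := by
      rw [← Erg.inducedMap_iterate hTc]
      apply Erg.no_fixed_iterate (hTm (i+1)) (hE (i+1))
      · exact Nat.two_pow_pos _
      · rw [ZMod.card]
        exact Nat.pow_lt_pow_right (by norm_num) (Nat.lt_succ_self i)
    have heqi : padMod i (T^[2^i] 0) = padMod i 0 := by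
      rw [← Erg.inducedMap_iterate hTc]
      have := Erg.iterate_card (hTm i) (hE i) (padMod i 0)
      rwa [ZMod.card] at this
    have hbit : bit2 i (T^[2^i] 0) ≠ bit2 i 0 :=
      fun h => hne ((Erg.padMod_succ_iff i _ _).mpr ⟨heqi, h⟩)
    rw [hsum] at hbit
    have h1 : ∑ v, φ v = 1 := by
      have : ∀ a s : ZMod 2, a + s ≠ a → s = 1 := by decide
      exact this _ _ hbit
    exact (Erg.sum_eq_one_iff_odd φ).mp h1
  · intro h n
    induction n with
    | zero =>
      intro a b
      refine ⟨0, ?_⟩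
      have h1 : ∀ c : ZMod (2^0), c = 0 := by
        intro c
        have hlt : c.val < 2^0 := ZMod.val_lt c
        have : c.val = 0 := by simpa using hlt
        rwa [ZMod.val_eq_zero] at this
      rw [Function.iterate_zero_apply, h1 a, h1 b]
    | succ n ih =>
      set lift := fun a : ZMod (2^n) => ((a.val : ℕ) : ℤ_[2]) with hlift
      set e := Equiv.ofBijective _ (Erg.bitsMap_bijective n) with he
      set φ := fun v : Fin n → ZMod 2 =>
        bit2 n (T (lift (e.symm v))) + bit2 n (lift (e.symm v)) with hφdef
      have hrep : ∀ x : ℤ_[2], bit2 n (T x) = bit2 n x + φ (fun s : Fin n => bit2 (s:ℕ) x) := by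
        intro x
        have h1 : (fun s : Fin n => bit2 (s:ℕ) x) = e (padMod n x) := by
          show _ = Erg.bitsMap n (padMod n x)
          rw [Erg.bitsMap_padMod]
        rw [h1, hφdef]
        simp only [Equiv.symm_apply_apply]
        have h2 : padMod n x = padMod n (lift (padMod n x)) := (Erg.padMod_val n _).symm
        have h3 := Erg.keyE hTc hTm n h2
        rw [← h3]
        have : ∀ a b : ZMod 2, a = b + (a + b) := by decide
        exact this _ _
      have hsum1 : ∑ v, φ v = 1 := (Erg.sum_eq_one_iff_odd φ).mpr (h n φ hrep)
      have key : ∀ x : ℤ_[2],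
          padMod (n+1) (T^[2^n] x) = padMod (n+1) x + ((2^n : ℕ) : ZMod (2^(n+1))) := by
        intro x
        have hmod : padMod n (T^[2^n] x) = padMod n x := by
          rw [← Erg.inducedMap_iterate hTc]
          have := Erg.iterate_card (hTm n) ih (padMod n x)
          rwa [ZMod.card] at this
        have hbit : bit2 n (T^[2^n] x) = bit2 n x + 1 := by
          rw [Erg.bit_iter_sum hrep (2^n) x, Erg.sum_orbit hTc (hTm n) ih x φ, hsum1]
        exact Erg.padMod_succ_add n hmod.symm hbit
      intro a b
      set xa := ((a.val : ℕ) : ℤ_[2]) with hxa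
      set xb := ((b.val : ℕ) : ℤ_[2]) with hxb
      have ha : padMod (n+1) xa = a := Erg.padMod_val _ _
      have hb' : padMod (n+1) xb = b := Erg.padMod_val _ _
      obtain ⟨r, hr⟩ := ih (padMod n xa) (padMod n xb)
      rw [Erg.inducedMap_iterate hTc] at hr
      by_cases hb2 : bit2 n (T^[r] xa) = bit2 n xb
      · refine ⟨r, ?_⟩
        rw [← ha, Erg.inducedMap_iterate hTc, ← hb']
        exact (Erg.padMod_succ_iff n _ _).mpr ⟨hr, hb2⟩
      · refine ⟨2^n + r, ?_⟩
        rw [← ha, Erg.inducedMap_iterate hTc, Function.iterate_add_apply, key (T^[r] xa)]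
        have hbb : bit2 n xb = bit2 n (T^[r] xa) + 1 := by
          have : ∀ a b : ZMod 2, a ≠ b → b = a + 1 := by decide
          exact this _ _ hb2
        rw [← hb', Erg.padMod_succ_add n hr hbb]
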